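/- For all integers n' ≥ 1 and k with n' ≤ k ≤ 3n', the probability that exactly one of n' nodes beeps when each beeps independently with probability 1/k, namely (n'/k)·(1 - 1/k)^{n'-1}, is at least 1/5. -/

import Mathlib

/-- If each of `n' ≥ 1` nodes beeps independently with probability `1/k`, with
`n' ≤ k ≤ 3n'`, then the probability `(n'/k) * (1 - 1/k)^(n'-1)` that exactly
one node beeps is at least `1/5`. -/
theorem exactly_one_beep_prob_ge (n' k : ℕ) (hn : 1 ≤ n') (hk₁ : n' ≤ k) (hk₂ : k ≤ 3 * n') :
    (1 : ℝ) / 5 ≤ ((n' : ℝ) / (k : ℝ)) * (1 - 1 / (k : ℝ)) ^ (n' - 1) := by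
  rcases eq_or_lt_of_le hn with h1 | h2
  · -- n' = 1
    have hn1 : n' = 1 := h1.symm
    subst hn1
    simp only [Nat.sub_self, pow_zero, mul_one, Nat.cast_one]
    have hk0 : (0 : ℝ) < (k : ℝ) := by
      exact_mod_cast Nat.lt_of_lt_of_le Nat.zero_lt_one hk₁
    have hk5 : (k : ℝ) ≤ 5 := by
      have : k ≤ 3 := by omega
      exact_mod_cast this.trans (by norm_num)
    calc (1:ℝ)/5 ≤ 1/(k:ℝ) := one_div_le_one_div_of_le hk0 hk5
      _ = (1:ℝ)/(k:ℝ) := rfl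
  · -- n' ≥ 2
    have hn2 : 2 ≤ n' := h2
    have hk2 : 2 ≤ k := le_trans hn2 hk₁
    set N : ℝ := (n' : ℝ) with hN
    set K : ℝ := (k : ℝ) with hK
    have hN2 : (2:ℝ) ≤ N := by rw [hN]; exact_mod_cast hn2
    have hK1 : (1:ℝ) < K := by
      have : (2:ℝ) ≤ K := by rw [hK]; exact_mod_cast hk2
      linarith
    have hK0 : (0:ℝ) < K := by linarith
    have hNK : N ≤ K := by rw [hN, hK]; exact_mod_cast hk₁
    have hK3N : K ≤ 3 * N := by rw [hN, hK]; exact_mod_cast hk₂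
    -- step 1: 1 - 1/K ≥ exp (-(1/(K-1)))
    have hKm1 : (0:ℝ) < K - 1 := by linarith
    have step1 : Real.exp (-(1/(K-1))) ≤ 1 - 1/K := by
      have h := Real.add_one_le_exp (1/(K-1))
      rw [Real.exp_neg]
      rw [inv_le_comm₀ (Real.exp_pos _) (by
        have : 1/K < 1 := by rw [div_lt_one hK0]; linarith
        linarith)]
      have heq : (1 - 1/K)⁻¹ = 1/(K-1) + 1 := by
        field_simp
        ring
      rw [heq]
      exact h
    -- step 2: power
    have hexp_nonneg : (0:ℝ) ≤ Real.exp (-(1/(K-1))) := (Real.exp_pos _).le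
    have step2 : Real.exp (-(1/(K-1))) ^ (n' - 1) ≤ (1 - 1/K) ^ (n' - 1) :=
      pow_le_pow_left₀ hexp_nonneg step1 _
    -- exp power as exp of product
    have hcast : ((n' - 1 : ℕ) : ℝ) = N - 1 := by
      rw [hN]; push_cast [Nat.cast_sub hn]; ring
    have step3 : Real.exp (-(1/(K-1))) ^ (n' - 1) = Real.exp (-((N-1)/(K-1))) := by
      rw [← Real.exp_nat_mul, ← hcast]
      ring_nf
    -- (N-1)/(K-1) ≤ N/K
    have step4 : (N-1)/(K-1) ≤ N/K := by
      rw [div_le_div_iff₀ hKm1 hK0]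
      nlinarith
    have step5 : Real.exp (-(N/K)) ≤ Real.exp (-((N-1)/(K-1))) :=
      Real.exp_le_exp.mpr (by linarith)
    -- combine: expression ≥ (N/K) * exp(-(N/K))
    set t : ℝ := N / K with ht
    have ht13 : 1/3 ≤ t := by
      rw [ht, le_div_iff₀ hK0]; linarith
    have ht1 : t ≤ 1 := by
      rw [ht, div_le_one hK0]; exact hNK
    have htpos : 0 < t := by linarith
    have hlow : t * Real.exp (-t) ≤ t * (1 - 1/K) ^ (n' - 1) := by
      apply mul_le_mul_of_nonneg_left _ htpos.le
      calc Real.exp (-t) ≤ Real.exp (-((N-1)/(K-1))) := step5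
        _ = Real.exp (-(1/(K-1))) ^ (n' - 1) := step3.symm
        _ ≤ (1 - 1/K) ^ (n' - 1) := step2
    -- final: 1/5 ≤ t * exp(-t) for t ∈ [1/3, 1]
    have hexp1 : Real.exp 1 < 2.7182818286 := Real.exp_one_lt_d9
    have hb : Real.exp t * (2 - t) ≤ Real.exp 1 := by
      have h := Real.add_one_le_exp (1 - t)
      have : 2 - t ≤ Real.exp (1 - t) := by linarith
      have h2 : Real.exp t * (2 - t) ≤ Real.exp t * Real.exp (1 - t) :=
        mul_le_mul_of_nonneg_left this (Real.exp_pos t).le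
      rwa [← Real.exp_add, add_sub_cancel] at h2
    have hquad : Real.exp 1 ≤ 5 * t * (2 - t) := by nlinarith [mul_nonneg (sub_nonneg.mpr ht13) (sub_nonneg.mpr ht1)]
    have hfinal : Real.exp t ≤ 5 * t := by
      have h2t : (0:ℝ) < 2 - t := by linarith
      nlinarith [hb, hquad]
    have hee : Real.exp t * Real.exp (-t) = 1 := by
      rw [← Real.exp_add]; simp
    have h5 : (1:ℝ) ≤ 5 * (t * Real.exp (-t)) := by
      calc (1:ℝ) = Real.exp t * Real.exp (-t) := hee.symm
        _ ≤ 5 * t * Real.exp (-t) :=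
            mul_le_mul_of_nonneg_right hfinal (Real.exp_pos (-t)).le
        _ = 5 * (t * Real.exp (-t)) := by ring
    have : (1:ℝ)/5 ≤ t * Real.exp (-t) := by linarith only [h5]
    exact le_trans this hlow
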